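/- Fix λ > 0, ν > 0, ν_m > 0, ν_r > 0 and cost constants c_b, c_m, c_r ≥ 0, and set a := λ/(ν+λ) ∈ (0,1). For integers N ≥ 1 define Den(N) := ( (ν+λ)/ν_r + (λ/ν_m − λ/ν_r)·a^{N−1} )·(1−a) + (1 − a^N), θ_N(b_m) := (λ/ν_m)·a^{N−1}·(1−a) / Den(N), θ_N(b_r) := ( (ν+λ)/ν_r − (λ/ν_r)·a^{N−1} )·(1−a) / Den(N), and g(N) := (c_b + c_m)·θ_N(b_m) + (c_b + c_r)·θ_N(b_r). Then Den(N) > 0 for every N ≥ 1, and the sign of g(N+1) − g(N) does not depend on N: either g(N+1) > g(N) for all N ≥ 1, or g(N+1) < g(N) for all N ≥ 1, or g(N+1) = g(N) for all N ≥ 1. In other words, with constant failure rate ν the cost function g is strictly increasing, strictly decreasing, or constant. -/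

import Mathlib

set_option maxHeartbeats 1600000 in
/-- With constant failure rate ν the cost function g(N) of the unreliable
M/M/1 loss system is strictly increasing, strictly decreasing or constant: Den(N) > 0
for all N ≥ 1 and the sign of g(N+1) − g(N) does not depend on N. -/
theorem stmt_7 (lam nu num nur : ℝ)
    (hlam : 0 < lam) (hnu : 0 < nu) (hnum : 0 < num) (hnur : 0 < nur)
    (cb cm cr : ℝ) (hcb : 0 ≤ cb) (hcm : 0 ≤ cm) (hcr : 0 ≤ cr)
    (a : ℝ) (ha : a = lam / (nu + lam))
    (Den θm θr g : ℕ → ℝ)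
    (hDen : ∀ N, 1 ≤ N → Den N =
      ((nu + lam) / nur + (lam / num - lam / nur) * a ^ (N - 1)) * (1 - a)
        + (1 - a ^ N))
    (hθm : ∀ N, 1 ≤ N → θm N = (lam / num) * a ^ (N - 1) * (1 - a) / Den N)
    (hθr : ∀ N, 1 ≤ N → θr N =
      ((nu + lam) / nur - (lam / nur) * a ^ (N - 1)) * (1 - a) / Den N)
    (hg : ∀ N, 1 ≤ N → g N = (cb + cm) * θm N + (cb + cr) * θr N) :
    (∀ N, 1 ≤ N → 0 < Den N) ∧
    ((∀ N, 1 ≤ N → g N < g (N + 1)) ∨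
     (∀ N, 1 ≤ N → g (N + 1) < g N) ∨
     (∀ N, 1 ≤ N → g (N + 1) = g N)) := by
  have hnl : 0 < nu + lam := by linarith
  have ha0 : 0 < a := by rw [ha]; positivity
  have ha1 : a < 1 := by rw [ha, div_lt_one hnl]; linarith
  -- positivity of Den
  have hDpos : ∀ N, 1 ≤ N → 0 < Den N := by
    intro N hN
    obtain ⟨M, rfl⟩ := Nat.exists_eq_add_of_le hN
    have e1 : 1 + M - 1 = M := by omega
    have p1 : a ^ (1 + M) = a * a ^ M := by rw [pow_add, pow_one]
    rw [hDen _ hN, e1, p1]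
    have hx0 : 0 < a ^ M := pow_pos ha0 M
    have hx1 : a ^ M ≤ 1 := pow_le_one₀ ha0.le ha1.le
    have hB : 0 < lam / nur := by positivity
    have hA : 0 < lam / num := by positivity
    have hBC : lam / nur < (nu + lam) / nur := by
      rw [div_lt_div_iff₀ hnur hnur]; nlinarith
    have t1 : 0 < (1 - a) * ((nu + lam) / nur - lam / nur * a ^ M) := by
      have hBx : lam / nur * a ^ M ≤ lam / nur :=
        mul_le_of_le_one_right hB.le hx1
      have : 0 < (nu + lam) / nur - lam / nur * a ^ M := by linarith
      exact mul_pos (by linarith) this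
    have t2 : 0 < (1 - a) * (lam / num) * a ^ M := by
      apply mul_pos (mul_pos (by linarith) hA) hx0
    have t3 : 0 < 1 - a * a ^ M := by nlinarith
    nlinarith [t1, t2, t3]
  refine ⟨hDpos, ?_⟩
  -- key difference identity
  obtain ⟨P, hP⟩ : ∃ P : ℝ, P = (cb + cm) * (lam / num) - (cb + cr) * (lam / nur) :=
    ⟨_, rfl⟩
  obtain ⟨Q, hQ⟩ : ∃ Q : ℝ, Q = (cb + cr) * ((nu + lam) / nur) := ⟨_, rfl⟩
  obtain ⟨R, hR⟩ : ∃ R : ℝ, R = (lam / num - lam / nur) * (1 - a) - a := ⟨_, rfl⟩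
  obtain ⟨S, hS⟩ : ∃ S : ℝ, S = ((nu + lam) / nur) * (1 - a) + 1 := ⟨_, rfl⟩
  obtain ⟨K, hK⟩ : ∃ K : ℝ, K = Q * R - P * S := ⟨_, rfl⟩
  have hdiff : ∀ N, 1 ≤ N → g (N + 1) - g N =
      (1 - a) ^ 2 * a ^ (N - 1) * K / (Den N * Den (N + 1)) := by
    intro N hN
    obtain ⟨M, rfl⟩ := Nat.exists_eq_add_of_le hN
    have hN2 : 1 ≤ 1 + M + 1 := by omega
    have e1 : 1 + M - 1 = M := by omega
    have e2 : 1 + M + 1 - 1 = M + 1 := by omega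
    have p1 : a ^ (1 + M) = a * a ^ M := by rw [pow_add, pow_one]
    have p2 : a ^ (M + 1) = a ^ M * a := pow_succ a M
    have p3 : a ^ (1 + M + 1) = a ^ M * a * a := by
      rw [show 1 + M + 1 = M + 1 + 1 by omega, pow_succ, pow_succ]
    have hD1' : Den (1 + M) = R * a ^ M + S := by
      rw [hDen _ hN, e1, p1, hR, hS]; ring
    have hD2' : Den (1 + M + 1) = R * (a ^ M * a) + S := by
      rw [hDen _ hN2, e2, p2, p3, hR, hS]; ring
    have hD1ne : R * a ^ M + S ≠ 0 := hD1' ▸ (hDpos _ hN).ne'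
    have hD2ne : R * (a ^ M * a) + S ≠ 0 := hD2' ▸ (hDpos _ hN2).ne'
    have hg1 : g (1 + M) = (1 - a) * (P * a ^ M + Q) / (R * a ^ M + S) := by
      rw [hg _ hN, hθm _ hN, hθr _ hN, e1, hD1', hP, hQ]
      field_simp
      ring
    have hg2 : g (1 + M + 1) =
        (1 - a) * (P * (a ^ M * a) + Q) / (R * (a ^ M * a) + S) := by
      rw [hg _ hN2, hθm _ hN2, hθr _ hN2, e2, p2, hD2', hP, hQ]
      field_simp
      ring
    rw [hg1, hg2, hD1', hD2', e1, hK]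
    -- now pure algebra in atoms
    rw [div_sub_div _ _ hD2ne hD1ne, div_eq_div_iff (mul_ne_zero hD2ne hD1ne) (mul_ne_zero hD1ne hD2ne)]
    ring
  rcases lt_trichotomy K 0 with hKs | hKs | hKs
  · right; left
    intro N hN
    have hd := hdiff N hN
    have hnum : (1 - a) ^ 2 * a ^ (N - 1) * K < 0 := by
      have h1 : 0 < (1 - a) ^ 2 * a ^ (N - 1) :=
        mul_pos (pow_pos (show (0:ℝ) < 1 - a by linarith) 2) (pow_pos ha0 _)
      exact mul_neg_of_pos_of_neg h1 hKs
    have hden : 0 < Den N * Den (N + 1) :=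
      mul_pos (hDpos _ hN) (hDpos _ (by omega))
    have := div_neg_of_neg_of_pos hnum hden
    linarith [hd]
  · right; right
    intro N hN
    have hd := hdiff N hN
    rw [hKs] at hd
    simp at hd
    linarith
  · left
    intro N hN
    have hd := hdiff N hN
    have hnum : 0 < (1 - a) ^ 2 * a ^ (N - 1) * K :=
      mul_pos (mul_pos (pow_pos (show (0:ℝ) < 1 - a by linarith) 2) (pow_pos ha0 _)) hKs
    have hden : 0 < Den N * Den (N + 1) :=
      mul_pos (hDpos _ hN) (hDpos _ (by omega))
    have := div_pos hnum hden
    linarith [hd]
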